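/- Let R = [a..b] × [c..d] be a nonempty rectangle in ℤ² and X ⊆ R. Put R₀ = [a..b] × {c}, R₁ = [a..b] × (c..d], and Y = X ∩ R₁. The following are equivalent: (1) there exists an injection ψ : Y → X with ψ(y) <̇ y for all y ∈ Y; (2) for every subset Δ of Y whose points are pairwise incomparable with respect to <̇, there exists a strictly decreasing injection from Δ to X ∩ R₀. -/

import Mathlib

/-- Lemma about rectangles: let `R = [a..b] × [c..d]` be a nonempty rectangle,
`X ⊆ R`, `R₀ = [a..b] × {c}`, `R₁ = [a..b] × (c..d]` and `Y = X ∩ R₁`. Then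
there exists a strictly decreasing injection `Y → X` if and only if for every
subset `Δ` of `Y` with pairwise incomparable points (componentwise strict
order) there exists a strictly decreasing injection `Δ → X ∩ R₀`. -/
theorem stmt_6 (a b c d : ℤ) (hab : a ≤ b) (hcd : c ≤ d)
    (X : Set (ℤ × ℤ))
    (hX : X ⊆ {p : ℤ × ℤ | a ≤ p.1 ∧ p.1 ≤ b ∧ c ≤ p.2 ∧ p.2 ≤ d}) :
    (∃ ψ : ℤ × ℤ → ℤ × ℤ,
        Set.MapsTo ψ (X ∩ {p | c < p.2}) X ∧ Set.InjOn ψ (X ∩ {p | c < p.2}) ∧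
        ∀ y ∈ X ∩ {p | c < p.2}, (ψ y).1 < y.1 ∧ (ψ y).2 < y.2) ↔
    (∀ Δ ⊆ X ∩ {p | c < p.2},
        (∀ x ∈ Δ, ∀ y ∈ Δ, ¬(x.1 < y.1 ∧ x.2 < y.2)) →
        ∃ φ : ℤ × ℤ → ℤ × ℤ,
          Set.MapsTo φ Δ (X ∩ {p | p.2 = c}) ∧ Set.InjOn φ Δ ∧
          ∀ x ∈ Δ, (φ x).1 < x.1 ∧ (φ x).2 < x.2) := by
  classical
  set Y : Set (ℤ × ℤ) := X ∩ {p | c < p.2} with hYdef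
  constructor
  · -- forward direction
    rintro ⟨ψ, hmap, _hinj, hdec⟩ Δ hΔ hanti
    set g : ℤ × ℤ → ℤ × ℤ := fun p => if p ∈ Y then ψ p else p with hgdef
    have hgX : ∀ p ∈ X, g p ∈ X := by
      intro p hp
      by_cases h : p ∈ Y
      · simp only [hgdef, if_pos h]; exact hmap h
      · simp only [hgdef, if_neg h]; exact hp
    have hgfix : ∀ p, p ∉ Y → g p = p := by
      intro p h; simp only [hgdef, if_neg h]
    have hgle : ∀ p ∈ X, (g p).1 ≤ p.1 ∧ (g p).2 ≤ p.2 := by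
      intro p hp
      by_cases h : p ∈ Y
      · simp only [hgdef, if_pos h]
        exact ⟨(hdec p h).1.le, (hdec p h).2.le⟩
      · simp only [hgdef, if_neg h]; exact ⟨le_refl _, le_refl _⟩
    have hitfix : ∀ m : ℕ, ∀ p, p ∉ Y → g^[m] p = p := by
      intro m
      induction m with
      | zero => intro p _; rfl
      | succ m ih =>
        intro p hp
        rw [Function.iterate_succ_apply, hgfix p hp, ih p hp]
    have hitX : ∀ m : ℕ, ∀ p ∈ X, g^[m] p ∈ X := by
      intro m
      induction m with
      | zero => intro p hp; exact hp
      | succ m ih =>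
        intro p hp
        rw [Function.iterate_succ_apply]
        exact ih _ (hgX p hp)
    have hitle : ∀ m : ℕ, ∀ p ∈ X, (g^[m] p).1 ≤ p.1 ∧ (g^[m] p).2 ≤ p.2 := by
      intro m
      induction m with
      | zero => intro p _; exact ⟨le_refl _, le_refl _⟩
      | succ m ih =>
        intro p hp
        rw [Function.iterate_succ_apply]
        have h1 := ih (g p) (hgX p hp)
        have h2 := hgle p hp
        exact ⟨h1.1.trans h2.1, h1.2.trans h2.2⟩
    have hdrop : ∀ m : ℕ, ∀ p ∈ X, g^[m] p ∈ Y → (g^[m] p).2 + (m : ℤ) ≤ p.2 := by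
      intro m
      induction m with
      | zero => intro p _ _; simp
      | succ m ih =>
        intro p hp hm
        rw [Function.iterate_succ_apply] at hm ⊢
        by_cases h : p ∈ Y
        · have hψ : g p = ψ p := by simp only [hgdef, if_pos h]
          rw [hψ] at hm ⊢
          have hψX : ψ p ∈ X := hmap h
          have h1 := ih (ψ p) hψX hm
          have h2 : (ψ p).2 < p.2 := (hdec p h).2
          push_cast
          omega
        · exfalso
          rw [hgfix p h, hitfix m p h] at hm
          exact h hm
    set n : ℕ := (d - c).toNat + 1 with hndef
    refine ⟨g^[n], ?_, ?_, ?_⟩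
    · -- MapsTo into X ∩ {p.2 = c}
      intro p hp
      have hpY : p ∈ Y := hΔ hp
      have hpX : p ∈ X := hpY.1
      have h1 : g^[n] p ∈ X := hitX n p hpX
      have h2 : g^[n] p ∉ Y := by
        intro hY2
        have := hdrop n p hpX hY2
        have hc : c < (g^[n] p).2 := hY2.2
        have hd : p.2 ≤ d := (hX hpX).2.2.2
        have hn : (n : ℤ) = (d - c).toNat + 1 := by exact_mod_cast rfl
        omega
      refine ⟨h1, ?_⟩
      have hc : c ≤ (g^[n] p).2 := (hX h1).2.2.1
      have : ¬ c < (g^[n] p).2 := fun hcon => h2 ⟨h1, hcon⟩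
      simp only [Set.mem_setOf_eq]
      omega
    · -- InjOn
      have subA : ∀ k : ℕ, ∀ p q : ℤ × ℤ, q ∈ Y → g^[k] p = ψ q →
          (∃ j, g^[j] p = q) ∨ p = ψ q := by
        intro k
        induction k with
        | zero => intro p q _ h; exact Or.inr h
        | succ k ih =>
          intro p q hq h
          rw [Function.iterate_succ_apply'] at h
          by_cases hk : g^[k] p ∈ Y
          · have : ψ (g^[k] p) = ψ q := by
              rw [← h]; exact (if_pos hk).symm
            exact Or.inl ⟨k, _hinj hk hq this⟩
          · rw [hgfix _ hk] at h
            exact ih p q hq h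
      have hmerge : ∀ m : ℕ, ∀ p q : ℤ × ℤ, g^[m] p = g^[m] q →
          (∃ k, g^[k] p = q) ∨ (∃ k, g^[k] q = p) := by
        intro m
        induction m with
        | zero => intro p q h; exact Or.inl ⟨0, h⟩
        | succ m ih =>
          intro p q h
          rw [Function.iterate_succ_apply, Function.iterate_succ_apply] at h
          have step : ∀ p q : ℤ × ℤ, (∃ k, g^[k] (g p) = g q) → (∃ k, g^[k] p = q) ∨ (∃ k, g^[k] q = p) := by
            rintro p q ⟨k, hk⟩
            by_cases hq : q ∈ Y
            · have hψq : g q = ψ q := by simp only [hgdef, if_pos hq]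
              rw [hψq, ← Function.iterate_succ_apply] at hk
              rcases subA (k+1) p q hq hk with ⟨j, hj⟩ | hpq
              · exact Or.inl ⟨j, hj⟩
              · exact Or.inr ⟨1, by simpa [hψq] using hpq.symm⟩
            · rw [hgfix q hq, ← Function.iterate_succ_apply] at hk
              exact Or.inl ⟨k+1, hk⟩
          rcases ih (g p) (g q) h with hc | hc
          · exact step p q hc
          · exact (step q p hc).symm.imp id id
      intro p hp q hq heq
      have key : ∀ x y : ℤ × ℤ, x ∈ Δ → y ∈ Δ → (∃ k, g^[k] x = y) → x = y := by
        rintro x y hx hy ⟨k, hk⟩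
        match k with
        | 0 => exact hk.symm ▸ rfl
        | k + 1 =>
          exfalso
          have hxY : x ∈ Y := hΔ hx
          have hψ : g x = ψ x := by simp only [hgdef, if_pos hxY]
          rw [Function.iterate_succ_apply, hψ] at hk
          have hψX : ψ x ∈ X := hmap hxY
          have hle := hitle k (ψ x) hψX
          rw [hk] at hle
          have hd := hdec x hxY
          exact hanti y hy x hx ⟨lt_of_le_of_lt hle.1 hd.1, lt_of_le_of_lt hle.2 hd.2⟩
      rcases hmerge n p q heq with h | h
      · exact key p q hp hq h
      · exact (key q p hq hp h).symm
    · -- strictly decreasing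
      intro p hp
      have hpY : p ∈ Y := hΔ hp
      have hψ : g p = ψ p := by simp only [hgdef, if_pos hpY]
      rw [hndef, Function.iterate_succ_apply, hψ]
      have hψX : ψ p ∈ X := hmap hpY
      have hle := hitle ((d - c).toNat) (ψ p) hψX
      have hd := hdec p hpY
      exact ⟨lt_of_le_of_lt hle.1 hd.1, lt_of_le_of_lt hle.2 hd.2⟩
  · -- backward direction: Hall's marriage theorem
    intro h2
    set t : {p // p ∈ Y} → Finset (ℤ × ℤ) := fun y =>
      (Finset.Icc (a, c) (b, d)).filter
        (fun x => x ∈ X ∧ x.1 < y.val.1 ∧ x.2 < y.val.2) with htdef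
    have hmemIcc : ∀ x ∈ X, x ∈ Finset.Icc ((a, c) : ℤ × ℤ) (b, d) := by
      intro x hx
      have := hX hx
      rw [Finset.mem_Icc]
      exact ⟨⟨this.1, this.2.2.1⟩, ⟨this.2.1, this.2.2.2⟩⟩
    have hall : ∀ s : Finset {p // p ∈ Y}, s.card ≤ (s.biUnion t).card := by
      intro s
      set M : Finset {p // p ∈ Y} :=
        s.filter (fun y => ∀ z ∈ s, ¬(y.val.1 < z.val.1 ∧ y.val.2 < z.val.2)) with hMdef
      set Δ : Set (ℤ × ℤ) := ↑(M.image Subtype.val) with hΔdef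
      have hΔsub : Δ ⊆ X ∩ {p | c < p.2} := by
        rintro x hx
        simp only [hΔdef, Finset.coe_image, Set.mem_image, Finset.mem_coe] at hx
        obtain ⟨y, _, rfl⟩ := hx
        exact y.2
      have hΔanti : ∀ x ∈ Δ, ∀ y ∈ Δ, ¬(x.1 < y.1 ∧ x.2 < y.2) := by
        intro x hx y hy
        simp only [hΔdef, Finset.coe_image, Set.mem_image, Finset.mem_coe] at hx hy
        obtain ⟨x', hx', rfl⟩ := hx
        obtain ⟨y', hy', rfl⟩ := hy
        rw [hMdef, Finset.mem_filter] at hx' hy'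
        exact hx'.2 y' hy'.1
      obtain ⟨φ, hφmap, hφinj, hφdec⟩ := h2 Δ hΔsub hΔanti
      set F : {p // p ∈ Y} → ℤ × ℤ := fun y => if y ∈ M then φ y.val else y.val with hFdef
      have hvalΔ : ∀ y : {p // p ∈ Y}, y ∈ M → y.val ∈ Δ := by
        intro y hy
        simp only [hΔdef, Finset.coe_image, Set.mem_image, Finset.mem_coe]
        exact ⟨y, hy, rfl⟩
      apply Finset.card_le_card_of_injOn F
      · -- maps into biUnion
        intro y hy
        rw [Finset.mem_coe, Finset.mem_biUnion]
        by_cases hyM : y ∈ M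
        · have hyΔ := hvalΔ y hyM
          have h1 : φ y.val ∈ X ∩ {p | p.2 = c} := hφmap hyΔ
          have h3 := hφdec y.val hyΔ
          refine ⟨y, hy, ?_⟩
          simp only [hFdef, if_pos hyM, htdef, Finset.mem_filter]
          exact ⟨hmemIcc _ h1.1, h1.1, h3.1, h3.2⟩
        · have hyM2 := hyM
          rw [hMdef, Finset.mem_filter] at hyM2
          push_neg at hyM2
          obtain ⟨z, hz, hlt⟩ := hyM2 hy
          refine ⟨z, hz, ?_⟩
          simp only [hFdef, if_neg hyM, htdef, Finset.mem_filter]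
          exact ⟨hmemIcc _ y.2.1, y.2.1, hlt⟩
      · -- injective on s
        intro y₁ hy₁ y₂ hy₂ heq
        by_cases h1 : y₁ ∈ M <;> by_cases h2' : y₂ ∈ M
        · simp only [hFdef, if_pos h1, if_pos h2'] at heq
          exact Subtype.ext (hφinj (hvalΔ y₁ h1) (hvalΔ y₂ h2') heq)
        · exfalso
          simp only [hFdef, if_pos h1, if_neg h2'] at heq
          have hc1 : (φ y₁.val).2 = c := (hφmap (hvalΔ y₁ h1)).2
          have hc2 : c < y₂.val.2 := y₂.2.2
          rw [heq] at hc1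
          omega
        · exfalso
          simp only [hFdef, if_neg h1, if_pos h2'] at heq
          have hc1 : (φ y₂.val).2 = c := (hφmap (hvalΔ y₂ h2')).2
          have hc2 : c < y₁.val.2 := y₁.2.2
          rw [← heq] at hc1
          omega
        · simp only [hFdef, if_neg h1, if_neg h2'] at heq
          exact Subtype.ext heq
    obtain ⟨f, hfinj, hft⟩ := (Finset.all_card_le_biUnion_card_iff_exists_injective t).mp hall
    refine ⟨fun p => if h : p ∈ Y then f ⟨p, h⟩ else p, ?_, ?_, ?_⟩
    · intro p hp
      simp only [dif_pos hp]
      have := hft ⟨p, hp⟩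
      rw [htdef, Finset.mem_filter] at this
      exact this.2.1
    · intro p hp q hq heq
      simp only [dif_pos hp, dif_pos hq] at heq
      exact congrArg Subtype.val (hfinj heq)
    · intro p hp
      simp only [dif_pos hp]
      have := hft ⟨p, hp⟩
      rw [htdef, Finset.mem_filter] at this
      exact this.2.2
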